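/- arXiv:1611.04095 — 2 statements merged into one kernel-verified Lean document; each statement's English description precedes it below -/
import Mathlib

section
/- Let V(G) be a group whose left multiplications act as graph automorphisms of G, with identity element o. If p < p_T(G), then E^{P_p}[ |C_o| · P^o(T_{C_o} = ∞) ] = E^{P_p}[ cap(C_o) ], where cap(A) = ∑_{x ∈ A} P^x(T_A = ∞). -/
open MeasureTheory
open scoped ENNReal

namespace PaperUnion

variable {V : Type*}

/-- The subgraph of `G` consisting of the open edges of the percolation
configuration `ω`. -/
def openGraph (G : SimpleGraph V) (ω : Sym2 V → Bool) : SimpleGraph V where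
  Adj x y := G.Adj x y ∧ ω s(x, y) = true
  symm := by
    constructor
    rintro x y ⟨h1, h2⟩
    exact ⟨h1.symm, by rwa [Sym2.eq_swap]⟩
  loopless := by constructor; rintro x ⟨h, -⟩; exact G.irrefl h

/-- The open cluster of the vertex `x` in the configuration `ω`. -/
def cluster (G : SimpleGraph V) (ω : Sym2 V → Bool) (x : V) : Set V :=
  {y | (openGraph G ω).Reachable x y}

/-- `|C_x|`, the number of vertices of the open cluster of `x`. -/
noncomputable def clusterSize (G : SimpleGraph V) (ω : Sym2 V → Bool) (x : V) : ℝ≥0∞ :=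
  (cluster G ω x).encard

/-- `μ` is Bernoulli(p) bond percolation on `G`: a probability measure under which the
states of distinct edges are independent and each edge is open with probability `p`. -/
def IsBernoulli (G : SimpleGraph V) (p : ℝ≥0∞) (μ : Measure (Sym2 V → Bool)) : Prop :=
  IsProbabilityMeasure μ ∧
    ∀ F : Finset (Sym2 V), (F : Set (Sym2 V)) ⊆ G.edgeSet →
      ∀ b : Sym2 V → Bool,
        μ {ω | ∀ e ∈ F, ω e = b e} = ∏ e ∈ F, (if b e then p else 1 - p)

open Classical in
/-- The probability that the simple random walk started at `x` follows the
finite path `s`. -/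
noncomputable def pathProb (G : SimpleGraph V) [G.LocallyFinite] (x : V) {n : ℕ}
    (s : Fin (n + 1) → V) : ℝ≥0∞ :=
  (if s 0 = x then 1 else 0) *
    ∏ i : Fin n,
      if G.Adj (s i.castSucc) (s i.succ) then ((G.degree (s i.castSucc) : ℝ≥0∞))⁻¹ else 0

/-- `P^x(E)` for an event `E` depending on the first `n+1` positions of the simple
random walk. -/
noncomputable def walkProb (G : SimpleGraph V) [G.LocallyFinite] (x : V) (n : ℕ)
    (E : (Fin (n + 1) → V) → Prop) : ℝ≥0∞ :=
  ∑' s : Fin (n + 1) → V, {t : Fin (n + 1) → V | E t}.indicator (fun t => pathProb G x t) s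

/-- `P^x(T_A > n)`, where `T_A = inf {m ≥ 1 : S_m ∈ A}`. -/
noncomputable def probAvoid (G : SimpleGraph V) [G.LocallyFinite] (x : V) (A : Set V)
    (n : ℕ) : ℝ≥0∞ :=
  walkProb G x n (fun s => ∀ m : Fin (n + 1), 0 < (m : ℕ) → s m ∉ A)

/-- `P^x(T_A = ∞)`. -/
noncomputable def escapeProb (G : SimpleGraph V) [G.LocallyFinite] (x : V) (A : Set V) : ℝ≥0∞ :=
  ⨅ n : ℕ, probAvoid G x A n

/-- `P^x(k < T_A < ∞)`. -/
noncomputable def probHitAfter (G : SimpleGraph V) [G.LocallyFinite] (x : V) (A : Set V)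
    (k : ℕ) : ℝ≥0∞ :=
  probAvoid G x A k - escapeProb G x A

def IsVertexTransitive (G : SimpleGraph V) : Prop :=
  ∀ x y : V, ∃ φ : G ≃g G, φ x = y

def Transient (G : SimpleGraph V) [G.LocallyFinite] : Prop :=
  ∀ x : V, 0 < escapeProb G x {x}

def Recurrent (G : SimpleGraph V) [G.LocallyFinite] : Prop :=
  ∀ x : V, escapeProb G x {x} = 0

/-- The trace `{S_0, …, S_n}` of a finite path. -/
def trace [DecidableEq V] {n : ℕ} (s : Fin (n + 1) → V) : Finset V :=
  Finset.image s Finset.univ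

/-- `R_n`, the number of vertices visited by the path. -/
def rangeSize [DecidableEq V] {n : ℕ} (s : Fin (n + 1) → V) : ℕ :=
  (trace s).card

/-- The inner boundary `∂R_n` of the trace: the visited vertices having a
neighbour outside the trace. -/
def innerBoundary [DecidableEq V] (G : SimpleGraph V) {n : ℕ} (s : Fin (n + 1) → V) : Set V :=
  {x | x ∈ trace s ∧ ∃ y, G.Adj x y ∧ y ∉ trace s}

/-- `L_n = |∂R_n|`. -/
noncomputable def boundarySize [DecidableEq V] (G : SimpleGraph V) {n : ℕ}
    (s : Fin (n + 1) → V) : ℕ :=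
  (innerBoundary G s).ncard

/-- `E^{P^x}[R_n]`. -/
noncomputable def expRange [DecidableEq V] (G : SimpleGraph V) [G.LocallyFinite] (x : V)
    (n : ℕ) : ℝ≥0∞ :=
  ∑' s : Fin (n + 1) → V, pathProb G x s * (rangeSize s : ℝ≥0∞)

/-- `E^{P^x}[L_n]`. -/
noncomputable def expBoundary [DecidableEq V] (G : SimpleGraph V) [G.LocallyFinite] (x : V)
    (n : ℕ) : ℝ≥0∞ :=
  ∑' s : Fin (n + 1) → V, pathProb G x s * (boundarySize G s : ℝ≥0∞)

/-- `E[U_n]` where `U_n = |⋃_{i ≤ n} C_{S_i}|`, the expectation being taken with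
respect to the product of the walk measure started at `x` and the percolation
measure `μ`. -/
noncomputable def expUnion (G : SimpleGraph V) [G.LocallyFinite]
    (μ : Measure (Sym2 V → Bool)) (x : V) (n : ℕ) : ℝ≥0∞ :=
  ∑' s : Fin (n + 1) → V, pathProb G x s * ∫⁻ ω, (⋃ i, cluster G ω (s i)).encard ∂μ

/-- `c_p = E[|C_o| ⬝ P^o(T_{C_o} = ∞)]`. -/
noncomputable def cP (G : SimpleGraph V) [G.LocallyFinite] (μ : Measure (Sym2 V → Bool))
    (o : V) : ℝ≥0∞ :=
  ∫⁻ ω, clusterSize G ω o * escapeProb G o (cluster G ω o) ∂μ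


/-- `cap(A) = ∑_{x ∈ A} P^x (T_A = ∞)`. -/
noncomputable def capSum (G : SimpleGraph V) [G.LocallyFinite] (A : Set V) : ℝ≥0∞ :=
  ∑' x : A, escapeProb G (x : V) A

/-! ### Auxiliary lemmas -/

section Aux

variable (G : SimpleGraph V)

lemma openGraph_adj (ω : Sym2 V → Bool) (a b : V) :
    (openGraph G ω).Adj a b ↔ G.Adj a b ∧ ω s(a, b) = true := Iff.rfl

lemma openGraph_le (ω : Sym2 V → Bool) : openGraph G ω ≤ G := fun _ _ h => h.1

lemma mem_cluster_comm {ω : Sym2 V → Bool} {a b : V} :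
    a ∈ cluster G ω b ↔ b ∈ cluster G ω a :=
  ⟨SimpleGraph.Reachable.symm, SimpleGraph.Reachable.symm⟩

lemma cluster_eq_of_mem {ω : Sym2 V → Bool} {a b : V} (h : b ∈ cluster G ω a) :
    cluster G ω b = cluster G ω a := by
  ext z
  exact ⟨fun hz => (h : (openGraph G ω).Reachable a b).trans hz,
    fun hz => (h : (openGraph G ω).Reachable a b).symm.trans hz⟩

/-- Reachability via finite vertex sequences. -/
lemma reachable_iff_seq (H : SimpleGraph V) (x y : V) :
    H.Reachable x y ↔ ∃ (n : ℕ) (s : Fin (n + 1) → V), s 0 = x ∧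
      (∀ i : Fin n, H.Adj (s i.castSucc) (s i.succ)) ∧ s (Fin.last n) = y := by
  constructor
  · rintro ⟨w⟩
    refine ⟨w.length, fun i => w.getVert i, by simp, ?_, by simp⟩
    intro i
    have := w.adj_getVert_succ (i := (i : ℕ)) i.is_lt
    simpa using this
  · rintro ⟨n, s, h0, hadj, hl⟩
    have key : ∀ i : Fin (n + 1), H.Reachable x (s i) := by
      intro i
      induction i using Fin.induction with
      | zero => rw [h0]
      | succ i ih => exact ih.trans (hadj i).reachable
    have := key (Fin.last n)
    rwa [hl] at this

/-- The set of walks of length `n` in `G` starting at `x`. -/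
def walkSet (x : V) (n : ℕ) : Set (Fin (n + 1) → V) :=
  {s | s 0 = x ∧ ∀ i : Fin n, G.Adj (s i.castSucc) (s i.succ)}

lemma walkSet_finite [G.LocallyFinite] (x : V) : ∀ n, (walkSet G x n).Finite
  | 0 => by
      refine (Set.finite_singleton (fun _ => x)).subset ?_
      rintro s ⟨h0, -⟩
      simp only [Set.mem_singleton_iff]
      funext i
      rw [show i = 0 from Fin.ext (Nat.lt_one_iff.mp i.isLt), h0]
  | (n + 1) => by
      have IH := walkSet_finite x n
      have hsub : walkSet G x (n + 1) ⊆
          ⋃ t ∈ walkSet G x n, ⋃ v ∈ G.neighborSet (t (Fin.last n)),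
            {Fin.snoc t v} := by
        rintro s ⟨h0, hadj⟩
        have htW : Fin.init s ∈ walkSet G x n := by
          constructor
          · show s (Fin.castSucc 0) = x
            rw [show Fin.castSucc (0 : Fin (n + 1)) = 0 from rfl, h0]
          · intro i
            have := hadj i.castSucc
            show G.Adj (s (Fin.castSucc i.castSucc)) (s (Fin.castSucc i.succ))
            rwa [← Fin.succ_castSucc]
        have hvN : s (Fin.last (n + 1)) ∈ G.neighborSet (Fin.init s (Fin.last n)) := by
          have := hadj (Fin.last n)
          show G.Adj (s (Fin.castSucc (Fin.last n))) (s (Fin.last (n + 1)))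
          rwa [← Fin.succ_last]
        refine Set.mem_biUnion htW (Set.mem_biUnion hvN ?_)
        simp only [Set.mem_singleton_iff]
        exact (Fin.snoc_init_self s).symm
      exact (IH.biUnion fun t _ =>
        (Set.toFinite (G.neighborSet (t (Fin.last n)))).biUnion fun v _ =>
          Set.finite_singleton _).subset hsub

lemma pathProb_eq_zero [G.LocallyFinite] {x : V} {n : ℕ} {s : Fin (n + 1) → V}
    (h : s ∉ walkSet G x n) : pathProb G x s = 0 := by
  classical
  unfold pathProb
  rw [walkSet, Set.mem_setOf_eq, not_and_or] at h
  rcases h with h | h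
  · rw [if_neg h, zero_mul]
  · push_neg at h
    obtain ⟨i, hi⟩ := h
    refine mul_eq_zero.mpr (Or.inr ?_)
    exact Finset.prod_eq_zero (Finset.mem_univ i) (by simp [hi])

lemma walkProb_eq_sum [G.LocallyFinite] (x : V) (n : ℕ) (E : (Fin (n + 1) → V) → Prop) :
    walkProb G x n E = ∑ s ∈ (walkSet_finite G x n).toFinset,
      {t : Fin (n + 1) → V | E t}.indicator (fun t => pathProb G x t) s := by
  refine tsum_eq_sum ?_
  intro s hs
  rw [Set.Finite.mem_toFinset] at hs
  by_cases hE : s ∈ {t : Fin (n + 1) → V | E t}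
  · rw [Set.indicator_of_mem hE]
    exact pathProb_eq_zero G hs
  · exact Set.indicator_of_notMem hE _

lemma countable_component [G.LocallyFinite] (x : V) : {y | G.Reachable x y}.Countable := by
  have hsub : {y | G.Reachable x y} ⊆
      ⋃ n : ℕ, (fun s : Fin (n + 1) → V => s (Fin.last n)) '' walkSet G x n := by
    intro y hy
    obtain ⟨n, s, h0, hadj, hl⟩ := (reachable_iff_seq G x y).mp hy
    exact Set.mem_iUnion.mpr ⟨n, ⟨s, ⟨h0, hadj⟩, hl⟩⟩
  exact Set.Countable.mono hsub
    (Set.countable_iUnion fun n => ((walkSet_finite G x n).image _).countable)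

/-! ### The edge σ-algebra and cylinder events -/

/-- Cylinder events over finitely many edges of `G`. -/
def cylinders : Set (Set (Sym2 V → Bool)) :=
  {S | ∃ (F : Finset (Sym2 V)) (b : Sym2 V → Bool), (F : Set (Sym2 V)) ⊆ G.edgeSet ∧
    S = {ω | ∀ e ∈ F, ω e = b e}}

/-- The σ-algebra generated by the states of the edges of `G`. -/
def edgeSigma : MeasurableSpace (Sym2 V → Bool) :=
  MeasurableSpace.generateFrom (cylinders G)

lemma edgeSigma_le : edgeSigma G ≤ (inferInstance : MeasurableSpace (Sym2 V → Bool)) := by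
  refine MeasurableSpace.generateFrom_le ?_
  rintro S ⟨F, b, -, rfl⟩
  have hS : {ω : Sym2 V → Bool | ∀ e ∈ F, ω e = b e} = ⋂ e ∈ F, {ω | ω e = b e} := by
    ext ω; simp
  rw [hS]
  refine Finset.measurableSet_biInter F fun e _ => ?_
  have hpre : {ω : Sym2 V → Bool | ω e = b e} =
      (fun ω : Sym2 V → Bool => ω e) ⁻¹' {b e} := rfl
  rw [hpre]
  exact measurable_pi_apply e (measurableSet_singleton (b e))

lemma isPiSystem_cylinders : IsPiSystem (cylinders G) := by
  classical
  rintro S ⟨F1, b1, hF1, rfl⟩ T ⟨F2, b2, hF2, rfl⟩ hne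
  obtain ⟨ω0, hω1, hω2⟩ := hne
  refine ⟨F1 ∪ F2, fun e => if e ∈ F1 then b1 e else b2 e, ?_, ?_⟩
  · rw [Finset.coe_union]
    exact Set.union_subset hF1 hF2
  · ext ω
    simp only [Set.mem_inter_iff, Set.mem_setOf_eq, Finset.mem_union]
    constructor
    · rintro ⟨h1, h2⟩ e he
      by_cases hF : e ∈ F1
      · rw [if_pos hF]; exact h1 e hF
      · rw [if_neg hF]; exact h2 e (he.resolve_left hF)
    · intro h
      constructor
      · intro e he
        have := h e (Or.inl he)
        rwa [if_pos he] at this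
      · intro e he
        have := h e (Or.inr he)
        by_cases hF : e ∈ F1
        · rw [if_pos hF] at this
          rw [this, ← hω1 e hF, hω2 e he]
        · rwa [if_neg hF] at this

end Aux

section Transport

variable [Group V] (G : SimpleGraph V)
variable (hinv : ∀ g x y : V, G.Adj x y ↔ G.Adj (g * x) (g * y))

/-- Pullback of a configuration along left multiplication by `g`. -/
def confMap (g : V) (ω : Sym2 V → Bool) : Sym2 V → Bool :=
  fun e => ω (Sym2.map (g * ·) e)

lemma measurable_confMap (g : V) : Measurable (confMap (V := V) g) :=
  measurable_pi_lambda _ fun e => measurable_pi_apply _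

lemma emap_emap (g : V) (e : Sym2 V) :
    Sym2.map (g⁻¹ * ·) (Sym2.map (g * ·) e) = e := by
  rw [Sym2.map_map]
  induction e using Sym2.ind with
  | _ a b => simp [inv_mul_cancel_left]

lemma emap_injective (g : V) : Function.Injective (Sym2.map (g * ·) : Sym2 V → Sym2 V) := by
  intro e1 e2 h
  have := congrArg (Sym2.map (g⁻¹ * ·)) h
  rwa [emap_emap, emap_emap] at this

include hinv in
lemma emap_mem_edgeSet (g : V) {e : Sym2 V} (he : e ∈ G.edgeSet) :
    Sym2.map (g * ·) e ∈ G.edgeSet := by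
  induction e using Sym2.ind with
  | _ a b =>
    rw [Sym2.map_pair_eq, SimpleGraph.mem_edgeSet] at *
    exact (hinv g a b).mp he

include hinv in
lemma adj_confMap (g : V) (ω : Sym2 V → Bool) (a b : V) :
    (openGraph G (confMap g ω)).Adj a b ↔ (openGraph G ω).Adj (g * a) (g * b) := by
  rw [openGraph_adj, openGraph_adj]
  show (G.Adj a b ∧ ω (Sym2.map (g * ·) s(a, b)) = true) ↔ _
  rw [Sym2.map_pair_eq]
  exact and_congr (hinv g a b) Iff.rfl

include hinv in
lemma mem_cluster_confMap (g : V) (ω : Sym2 V → Bool) (a b : V) :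
    b ∈ cluster G (confMap g ω) a ↔ g * b ∈ cluster G ω (g * a) := by
  constructor
  · intro h
    exact SimpleGraph.Reachable.map
      ⟨(g * ·), fun hab => (adj_confMap G hinv g ω _ _).mp hab⟩ h
  · intro h
    have hcc : confMap g⁻¹ (confMap g ω) = ω := by
      funext e
      show ω (Sym2.map (g * ·) (Sym2.map (g⁻¹ * ·) e)) = ω e
      congr 1
      simpa using emap_emap g⁻¹ e
    rw [← hcc] at h
    have := SimpleGraph.Reachable.map
      ⟨(g⁻¹ * ·), fun hab => (adj_confMap G hinv g⁻¹ _ _ _).mp hab⟩ h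
    have e1 : g⁻¹ * (g * a) = a := inv_mul_cancel_left g a
    have e2 : g⁻¹ * (g * b) = b := inv_mul_cancel_left g b
    have h3 : (openGraph G (confMap g ω)).Reachable (g⁻¹ * (g * a)) (g⁻¹ * (g * b)) := this
    rwa [e1, e2] at h3

include hinv in
lemma cluster_confMap (g : V) (ω : Sym2 V → Bool) (a : V) :
    cluster G (confMap g ω) a = (g * ·) ⁻¹' cluster G ω (g * a) := by
  ext b
  rw [Set.mem_preimage]
  exact mem_cluster_confMap G hinv g ω a b

include hinv in
lemma degree_mul [G.LocallyFinite] (g x : V) : G.degree (g * x) = G.degree x := by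
  classical
  have himg : G.neighborFinset (g * x) = (G.neighborFinset x).image (g * ·) := by
    ext y
    simp only [SimpleGraph.mem_neighborFinset, Finset.mem_image]
    constructor
    · intro h
      refine ⟨g⁻¹ * y, ?_, by simp⟩
      rw [hinv g, mul_inv_cancel_left]
      exact h
    · rintro ⟨z, hz, rfl⟩
      exact (hinv g x z).mp hz
  rw [← SimpleGraph.card_neighborFinset_eq_degree, ← SimpleGraph.card_neighborFinset_eq_degree,
    himg, Finset.card_image_of_injective _ (mul_right_injective g)]

include hinv in
lemma pathProb_mul [G.LocallyFinite] (g x : V) {n : ℕ} (s : Fin (n + 1) → V) :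
    pathProb G (g * x) (fun i => g * s i) = pathProb G x s := by
  classical
  unfold pathProb
  congr 1
  · exact if_congr (mul_right_inj g) rfl rfl
  · refine Finset.prod_congr rfl fun i _ => ?_
    rw [degree_mul G hinv]
    exact if_congr (hinv g _ _).symm rfl rfl

include hinv in
lemma probAvoid_mul [G.LocallyFinite] (g x : V) (A : Set V) (n : ℕ) :
    probAvoid G (g * x) A n = probAvoid G x ((g * ·) ⁻¹' A) n := by
  unfold probAvoid walkProb
  rw [← Equiv.tsum_eq (Equiv.piCongrRight fun _ : Fin (n + 1) => Equiv.mulLeft g)]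
  refine tsum_congr fun s => ?_
  have happ : (Equiv.piCongrRight fun _ : Fin (n + 1) => Equiv.mulLeft g) s
      = fun i => g * s i := rfl
  rw [happ]
  by_cases hc : s ∈ {t : Fin (n + 1) → V | ∀ m : Fin (n + 1),
      0 < (m : ℕ) → t m ∉ ((g * ·) ⁻¹' A)}
  · rw [Set.indicator_of_mem hc,
      Set.indicator_of_mem (show (fun i => g * s i) ∈ {t : Fin (n + 1) → V |
        ∀ m : Fin (n + 1), 0 < (m : ℕ) → t m ∉ A} from hc)]
    exact pathProb_mul G hinv g x s
  · rw [Set.indicator_of_notMem hc,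
      Set.indicator_of_notMem (show (fun i => g * s i) ∉ {t : Fin (n + 1) → V |
        ∀ m : Fin (n + 1), 0 < (m : ℕ) → t m ∉ A} from hc)]

include hinv in
lemma escapeProb_mul [G.LocallyFinite] (g x : V) (A : Set V) :
    escapeProb G (g * x) A = escapeProb G x ((g * ·) ⁻¹' A) :=
  iInf_congr fun n => probAvoid_mul G hinv g x A n

/-! ### Measurability of cluster events -/

lemma measurableSet_cluster [G.LocallyFinite] (x y : V) :
    MeasurableSet[edgeSigma G] {ω : Sym2 V → Bool | y ∈ cluster G ω x} := by
  classical
  have hrw : {ω : Sym2 V → Bool | y ∈ cluster G ω x} =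
      ⋃ n : ℕ, ⋃ s ∈ (walkSet G x n ∩ {s | s (Fin.last n) = y}),
        {ω : Sym2 V → Bool | ∀ i : Fin n, ω s(s i.castSucc, s i.succ) = true} := by
    ext ω
    simp only [Set.mem_setOf_eq, Set.mem_iUnion, Set.mem_inter_iff]
    constructor
    · intro h
      obtain ⟨n, s, h0, hadj, hl⟩ := (reachable_iff_seq (openGraph G ω) x y).mp h
      exact ⟨n, s, ⟨⟨h0, fun i => (hadj i).1⟩, hl⟩, fun i => (hadj i).2⟩
    · rintro ⟨n, s, ⟨⟨h0, hadj⟩, hl⟩, hopen⟩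
      exact (reachable_iff_seq (openGraph G ω) x y).mpr
        ⟨n, s, h0, fun i => ⟨hadj i, hopen i⟩, hl⟩
  rw [hrw]
  refine MeasurableSet.iUnion fun n => ?_
  refine Set.Finite.measurableSet_biUnion
    ((walkSet_finite G x n).inter_of_left _) fun s hs => ?_
  refine MeasurableSpace.measurableSet_generateFrom ?_
  refine ⟨Finset.image (fun i : Fin n => s(s i.castSucc, s i.succ)) Finset.univ,
    fun _ => true, ?_, ?_⟩
  · intro e he
    simp only [Finset.coe_image, Set.mem_image, Finset.mem_coe, Finset.mem_univ] at he
    obtain ⟨i, -, rfl⟩ := he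
    exact (hs.1.2 i)
  · ext ω
    simp only [Set.mem_setOf_eq, Finset.mem_image, Finset.mem_univ, true_and]
    constructor
    · rintro h e ⟨i, rfl⟩
      exact h i
    · intro h i
      exact h _ ⟨i, rfl⟩

lemma measurable_escapeProb_cluster [G.LocallyFinite] (z x : V) :
    Measurable[edgeSigma G] fun ω : Sym2 V → Bool => escapeProb G z (cluster G ω x) := by
  unfold escapeProb
  refine Measurable.iInf fun n => ?_
  unfold probAvoid
  have hrw : (fun ω : Sym2 V → Bool => walkProb G z n
      (fun s => ∀ m : Fin (n + 1), 0 < (m : ℕ) → s m ∉ cluster G ω x)) =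
      fun ω => ∑ s ∈ (walkSet_finite G z n).toFinset,
        Set.indicator {ω' : Sym2 V → Bool |
            ∀ m : Fin (n + 1), 0 < (m : ℕ) → s m ∉ cluster G ω' x}
          (fun _ => pathProb G z s) ω := by
    funext ω
    rw [walkProb_eq_sum]
    refine Finset.sum_congr rfl fun s _ => ?_
    by_cases hc : ∀ m : Fin (n + 1), 0 < (m : ℕ) → s m ∉ cluster G ω x
    · rw [Set.indicator_of_mem (show s ∈ {t : Fin (n + 1) → V | ∀ m : Fin (n + 1),
          0 < (m : ℕ) → t m ∉ cluster G ω x} from hc),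
        Set.indicator_of_mem (show ω ∈ {ω' : Sym2 V → Bool | ∀ m : Fin (n + 1),
          0 < (m : ℕ) → s m ∉ cluster G ω' x} from hc)]
    · rw [Set.indicator_of_notMem (show s ∉ {t : Fin (n + 1) → V | ∀ m : Fin (n + 1),
          0 < (m : ℕ) → t m ∉ cluster G ω x} from hc),
        Set.indicator_of_notMem (show ω ∉ {ω' : Sym2 V → Bool | ∀ m : Fin (n + 1),
          0 < (m : ℕ) → s m ∉ cluster G ω' x} from hc)]
  rw [hrw]
  refine Finset.measurable_sum _ fun s _ => ?_
  refine Measurable.indicator measurable_const ?_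
  have heq : {ω' : Sym2 V → Bool | ∀ m : Fin (n + 1), 0 < (m : ℕ) → s m ∉ cluster G ω' x} =
      ⋂ m : Fin (n + 1), ⋂ (_ : 0 < (m : ℕ)), {ω' : Sym2 V → Bool | s m ∈ cluster G ω' x}ᶜ := by
    ext ω'; simp [Set.mem_setOf_eq]
  rw [heq]
  exact MeasurableSet.iInter fun m => MeasurableSet.iInter fun _ =>
    (measurableSet_cluster G x (s m)).compl

/-! ### Invariance of the Bernoulli measure -/

include hinv in
lemma lintegral_confMap {p : ℝ≥0∞} {μ : Measure (Sym2 V → Bool)}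
    (hμ : IsBernoulli G p μ) (g : V) {f : (Sym2 V → Bool) → ℝ≥0∞}
    (hf : Measurable[edgeSigma G] f) :
    ∫⁻ ω, f (confMap g ω) ∂μ = ∫⁻ ω, f ω ∂μ := by
  classical
  have hle := edgeSigma_le G
  have hmeas := measurable_confMap (V := V) g
  haveI hprob : IsProbabilityMeasure μ := hμ.1
  haveI hmapprob : IsProbabilityMeasure (μ.map (confMap g)) :=
    Measure.isProbabilityMeasure_map hmeas.aemeasurable
  have htrim : (μ.map (confMap g)).trim hle = μ.trim hle := by
    refine @MeasureTheory.ext_of_generate_finite _ (edgeSigma G)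
      ((μ.map (confMap g)).trim hle) (μ.trim hle) (cylinders G) rfl
      (isPiSystem_cylinders G) (MeasureTheory.isFiniteMeasure_trim hle) ?_ ?_
    · rintro S hS
      obtain ⟨F, b, hF, rfl⟩ := hS
      have hSG : MeasurableSet[edgeSigma G] {ω : Sym2 V → Bool | ∀ e ∈ F, ω e = b e} :=
        MeasurableSpace.measurableSet_generateFrom ⟨F, b, hF, rfl⟩
      rw [trim_measurableSet_eq hle hSG, trim_measurableSet_eq hle hSG,
        Measure.map_apply hmeas (hle _ hSG)]
      have hpre : confMap g ⁻¹' {ω : Sym2 V → Bool | ∀ e ∈ F, ω e = b e} =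
          {ω : Sym2 V → Bool | ∀ e ∈ F.image (Sym2.map (g * ·)),
            ω e = b (Sym2.map (g⁻¹ * ·) e)} := by
        ext ω
        simp only [Set.mem_preimage, Set.mem_setOf_eq, Finset.mem_image]
        constructor
        · rintro h e ⟨e', he', rfl⟩
          rw [emap_emap]
          exact h e' he'
        · intro h e he
          have := h (Sym2.map (g * ·) e) ⟨e, he, rfl⟩
          rwa [emap_emap] at this
      rw [hpre, hμ.2 _ (by
        intro e he
        simp only [Finset.coe_image, Set.mem_image, Finset.mem_coe] at he
        obtain ⟨e', he', rfl⟩ := he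
        exact emap_mem_edgeSet G hinv g (hF he')), hμ.2 F hF b]
      rw [Finset.prod_image (fun e1 _ e2 _ h => emap_injective g h)]
      refine Finset.prod_congr rfl fun e _ => ?_
      rw [emap_emap]
    · rw [trim_measurableSet_eq hle MeasurableSet.univ,
        trim_measurableSet_eq hle MeasurableSet.univ]
      simp
  calc ∫⁻ ω, f (confMap g ω) ∂μ
      = ∫⁻ ω, f ω ∂(μ.map (confMap g)) :=
        (lintegral_map (hf.mono hle le_rfl) hmeas).symm
    _ = ∫⁻ ω, f ω ∂((μ.map (confMap g)).trim hle) := (lintegral_trim hle hf).symm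
    _ = ∫⁻ ω, f ω ∂(μ.trim hle) := by rw [htrim]
    _ = ∫⁻ ω, f ω ∂μ := lintegral_trim hle hf

end Transport

/-- `c_p = E[cap (C_o)]` on graphs with a transitive group structure. -/
theorem statement_4 {V : Type*} [Group V] [DecidableEq V] (G : SimpleGraph V) [G.LocallyFinite]
    (hinv : ∀ g x y : V, G.Adj x y ↔ G.Adj (g * x) (g * y))
    (hdeg : ∃ Δ : ℕ, ∀ x : V, G.degree x ≤ Δ)
    (p : ℝ≥0∞) (hp : p < 1)
    (μ : Measure (Sym2 V → Bool)) (hμ : IsBernoulli G p μ)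
    (hsub : ∫⁻ ω, clusterSize G ω (1 : V) ∂μ < ⊤) :
    cP G μ 1 = ∫⁻ ω, capSum G (cluster G ω (1 : V)) ∂μ := by
  classical
  set K : Set V := {y : V | G.Reachable 1 y} with hK
  have hKc : K.Countable := countable_component G 1
  haveI := hKc.to_subtype
  set F : V → V → (Sym2 V → Bool) → ℝ≥0∞ := fun z x =>
    Set.indicator {ω : Sym2 V → Bool | x ∈ cluster G ω 1}
      (fun ω => escapeProb G z (cluster G ω 1)) with hFdef
  have hFmeasG : ∀ z x : V, Measurable[edgeSigma G] (F z x) := fun z x =>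
    (measurable_escapeProb_cluster G z 1).indicator (measurableSet_cluster G 1 x)
  have hFmeas : ∀ z x : V, Measurable (F z x) := fun z x =>
    (hFmeasG z x).mono (edgeSigma_le G) le_rfl
  have hclusterK : ∀ ω : Sym2 V → Bool, cluster G ω 1 ⊆ K := by
    intro ω y hy
    exact SimpleGraph.Reachable.mono (openGraph_le G ω) hy
  have hFzero : ∀ z x : V, x ∉ K → ∀ ω, F z x ω = 0 := by
    intro z x hx ω
    simp only [hFdef]
    exact Set.indicator_of_notMem (show ω ∉ {ω' : Sym2 V → Bool |
      x ∈ cluster G ω' 1} from fun h => hx (hclusterK ω h)) _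
  -- Fubini-type swap, restricting to the countable component K
  have hswap : ∀ H : V → (Sym2 V → Bool) → ℝ≥0∞, (∀ x, Measurable (H x)) →
      (∀ x ∉ K, ∀ ω, H x ω = 0) →
      ∫⁻ ω, ∑' x : V, H x ω ∂μ = ∑' x : V, ∫⁻ ω, H x ω ∂μ := by
    intro H hm hz
    calc ∫⁻ ω, ∑' x : V, H x ω ∂μ
        = ∫⁻ ω, ∑' x : K, H x ω ∂μ := by
          refine lintegral_congr fun ω => ?_
          refine (tsum_subtype_eq_of_support_subset
            (f := fun x => H x ω) (s := K) ?_).symm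
          intro x hx
          by_contra hxK
          exact hx (hz x hxK ω)
      _ = ∑' x : K, ∫⁻ ω, H x ω ∂μ :=
          lintegral_tsum fun x => (hm x).aemeasurable
      _ = ∑' x : V, ∫⁻ ω, H x ω ∂μ := by
          refine tsum_subtype_eq_of_support_subset
            (f := fun x => ∫⁻ ω, H x ω ∂μ) (s := K) ?_
          intro x hx
          by_contra hxK
          refine hx ?_
          show ∫⁻ ω, H x ω ∂μ = 0
          calc ∫⁻ ω, H x ω ∂μ = ∫⁻ _, 0 ∂μ := lintegral_congr fun ω => hz x hxK ω
            _ = 0 := lintegral_zero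
  -- the left-hand side
  have hL : cP G μ 1 = ∑' x : V, ∫⁻ ω, F 1 x ω ∂μ := by
    rw [cP]
    rw [show (fun ω => clusterSize G ω 1 * escapeProb G 1 (cluster G ω 1)) =
        fun ω => ∑' x : V, F 1 x ω from ?_]
    · exact hswap (F 1) (hFmeas 1) (hFzero 1)
    · funext ω
      have hptwise : ∀ x : V, F 1 x ω =
          Set.indicator (cluster G ω 1) (fun _ => (1 : ℝ≥0∞)) x *
            escapeProb G 1 (cluster G ω 1) := by
        intro x
        by_cases h : x ∈ cluster G ω 1
        · simp only [hFdef]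
          rw [Set.indicator_of_mem (show ω ∈ {ω' : Sym2 V → Bool |
              x ∈ cluster G ω' 1} from h), Set.indicator_of_mem h, one_mul]
        · simp only [hFdef]
          rw [Set.indicator_of_notMem (show ω ∉ {ω' : Sym2 V → Bool |
              x ∈ cluster G ω' 1} from h), Set.indicator_of_notMem h, zero_mul]
      rw [tsum_congr hptwise, ENNReal.tsum_mul_right, ← tsum_subtype,
        ENNReal.tsum_set_one, clusterSize]
  -- the right-hand side
  have hR : ∫⁻ ω, capSum G (cluster G ω (1 : V)) ∂μ = ∑' x : V, ∫⁻ ω, F x x ω ∂μ := by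
    rw [show (fun ω => capSum G (cluster G ω (1 : V))) = fun ω => ∑' x : V, F x x ω from ?_]
    · exact hswap (fun x => F x x) (fun x => hFmeas x x) (fun x hx => hFzero x x hx)
    · funext ω
      rw [capSum, tsum_subtype (cluster G ω 1) (fun x => escapeProb G x (cluster G ω 1))]
      refine tsum_congr fun x => ?_
      by_cases h : x ∈ cluster G ω 1
      · simp only [hFdef]
        rw [Set.indicator_of_mem h,
          Set.indicator_of_mem (show ω ∈ {ω' : Sym2 V → Bool |
            x ∈ cluster G ω' 1} from h)]
      · simp only [hFdef]
        rw [Set.indicator_of_notMem h,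
          Set.indicator_of_notMem (show ω ∉ {ω' : Sym2 V → Bool |
            x ∈ cluster G ω' 1} from h)]
  -- translation invariance: step C
  have hC : ∀ x : V, ∫⁻ ω, F x x ω ∂μ = ∫⁻ ω, F 1 x⁻¹ ω ∂μ := by
    intro x
    have h1 : ∫⁻ ω, F x x (confMap x⁻¹ ω) ∂μ = ∫⁻ ω, F x x ω ∂μ :=
      lintegral_confMap G hinv hμ x⁻¹ (hFmeasG x x)
    rw [← h1]
    refine lintegral_congr fun ω => ?_
    have hcl : cluster G (confMap x⁻¹ ω) 1 = (x⁻¹ * ·) ⁻¹' cluster G ω x⁻¹ := by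
      have := cluster_confMap G hinv x⁻¹ ω 1
      rwa [mul_one] at this
    have hmem : x ∈ cluster G (confMap x⁻¹ ω) 1 ↔ x⁻¹ ∈ cluster G ω 1 := by
      rw [hcl, Set.mem_preimage, inv_mul_cancel]
      exact mem_cluster_comm G
    by_cases h : x⁻¹ ∈ cluster G ω 1
    · simp only [hFdef]
      rw [Set.indicator_of_mem (show confMap x⁻¹ ω ∈ {ω' : Sym2 V → Bool |
          x ∈ cluster G ω' 1} from hmem.mpr h),
        Set.indicator_of_mem (show ω ∈ {ω' : Sym2 V → Bool |
          x⁻¹ ∈ cluster G ω' 1} from h), hcl]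
      have htrans := escapeProb_mul G hinv x⁻¹ x (cluster G ω x⁻¹)
      rw [inv_mul_cancel] at htrans
      rw [← htrans, cluster_eq_of_mem G h]
    · simp only [hFdef]
      rw [Set.indicator_of_notMem (show confMap x⁻¹ ω ∉ {ω' : Sym2 V → Bool |
          x ∈ cluster G ω' 1} from fun hh => h (hmem.mp hh)),
        Set.indicator_of_notMem (show ω ∉ {ω' : Sym2 V → Bool |
          x⁻¹ ∈ cluster G ω' 1} from h)]
  calc cP G μ 1 = ∑' x : V, ∫⁻ ω, F 1 x ω ∂μ := hL
    _ = ∑' x : V, ∫⁻ ω, F 1 ((Equiv.inv V) x) ω ∂μ :=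
        ((Equiv.inv V).tsum_eq fun x => ∫⁻ ω, F 1 x ω ∂μ).symm
    _ = ∑' x : V, ∫⁻ ω, F x x ω ∂μ := by
        refine tsum_congr fun x => ?_
        rw [show (Equiv.inv V) x = x⁻¹ from rfl]
        exact (hC x).symm
    _ = ∫⁻ ω, capSum G (cluster G ω (1 : V)) ∂μ := hR.symm

end PaperUnion
end

section
/- For any infinite connected graph G with bounded degrees and any n, the deterministic inequalities R_n ≤ U_n ≤ R_n + ∑_{x ∈ ∂R_n} |C_x| hold, where ∂R_n is the set of x in the trace with some neighbor outside the trace; moreover (p/Δ_G) E^{P^o}[L_n] ≤ E[U_n] − E^{P^o}[R_n] ≤ (sup_x E[|C_x|]) E^{P^o}[L_n]. -/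
open MeasureTheory
open scoped ENNReal

namespace PaperUnion

variable {V : Type*}

section Aux

open Set SimpleGraph

variable {V : Type*}

lemma walk_of_open_walk {G : SimpleGraph V} {ω : Sym2 V → Bool} :
    ∀ {x y : V}, (openGraph G ω).Walk x y → ∃ w : G.Walk x y, ∀ e ∈ w.edges, ω e = true := by
  intro x y w
  induction w with
  | nil => exact ⟨SimpleGraph.Walk.nil, by simp⟩
  | cons h w ih =>
    obtain ⟨w', hw'⟩ := ih
    refine ⟨SimpleGraph.Walk.cons h.1 w', ?_⟩
    intro e he
    rw [SimpleGraph.Walk.edges_cons, List.mem_cons] at he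
    rcases he with rfl | he
    · exact h.2
    · exact hw' e he

lemma reachable_of_open_edges {G : SimpleGraph V} {ω : Sym2 V → Bool} :
    ∀ {x y : V} (w : G.Walk x y), (∀ e ∈ w.edges, ω e = true) →
      (openGraph G ω).Reachable x y := by
  intro x y w
  induction w with
  | nil => intro _; exact SimpleGraph.Reachable.refl _
  | @cons a b c h w ih =>
    intro hall
    have h1 : (openGraph G ω).Adj a b :=
      ⟨h, hall _ (by simp [SimpleGraph.Walk.edges_cons])⟩
    exact h1.reachable.trans (ih fun e he => hall e (by simp [SimpleGraph.Walk.edges_cons, he]))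

lemma mem_cluster_iff {G : SimpleGraph V} {ω : Sym2 V → Bool} {x y : V} :
    y ∈ cluster G ω x ↔ ∃ w : G.Walk x y, ∀ e ∈ w.edges, ω e = true := by
  constructor
  · intro hy
    obtain ⟨w0⟩ := hy
    exact walk_of_open_walk w0
  · rintro ⟨w, hw⟩
    exact reachable_of_open_edges w hw

instance walkCountable [DecidableEq V] (G : SimpleGraph V) [G.LocallyFinite] (x y : V) :
    Countable (G.Walk x y) := by
  have hs : Function.Surjective
      (fun q : Σ n : ℕ, {p : G.Walk x y // p.length = n} => (q.2 : G.Walk x y)) :=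
    fun w => ⟨⟨w.length, w, rfl⟩, rfl⟩
  exact hs.countable

lemma countable_of_connected {G : SimpleGraph V} [G.LocallyFinite] (hconn : G.Connected) :
    Countable V := by
  classical
  obtain ⟨o⟩ := hconn.nonempty
  set B : ℕ → Set V := fun n => {v | ∃ w : G.Walk v o, w.length ≤ n} with hB
  have hfin : ∀ n, (B n).Finite := by
    intro n; induction n with
    | zero =>
      refine (Set.finite_singleton o).subset ?_
      rintro v ⟨w, hw⟩
      cases w with
      | nil => rfl
      | cons h w => simp [SimpleGraph.Walk.length_cons] at hw
    | succ n ih =>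
      refine (ih.biUnion fun x _ => ((G.neighborSet x).toFinite.insert x)).subset ?_
      rintro v ⟨w, hw⟩
      cases w with
      | nil => exact Set.mem_biUnion (⟨SimpleGraph.Walk.nil, by simp⟩ : o ∈ B n) (Set.mem_insert _ _)
      | @cons _ u _ h w =>
        have hu : u ∈ B n := ⟨w, by simpa [SimpleGraph.Walk.length_cons] using hw⟩
        exact Set.mem_biUnion hu (Set.mem_insert_of_mem _ h.symm)
  have huniv : (Set.univ : Set V) ⊆ ⋃ n, B n := by
    intro v _
    obtain ⟨w⟩ := hconn.preconnected v o
    exact Set.mem_iUnion.2 ⟨w.length, w, le_rfl⟩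
  exact Set.countable_univ_iff.mp
    (((Set.countable_iUnion fun n => (hfin n).countable)).mono huniv)

lemma measurableSet_edge (e : Sym2 V) : MeasurableSet {ω : Sym2 V → Bool | ω e = true} := by
  have h : {ω : Sym2 V → Bool | ω e = true} = (fun ω : Sym2 V → Bool => ω e) ⁻¹' {true} := rfl
  rw [h]
  exact (measurable_pi_apply e) (measurableSet_singleton true)

lemma measurableSet_mem_cluster [DecidableEq V] (G : SimpleGraph V) [G.LocallyFinite] (x y : V) :
    MeasurableSet {ω : Sym2 V → Bool | y ∈ cluster G ω x} := by
  have h : {ω : Sym2 V → Bool | y ∈ cluster G ω x} =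
      ⋃ w : G.Walk x y, ⋂ e ∈ {e : Sym2 V | e ∈ w.edges}, {ω : Sym2 V → Bool | ω e = true} := by
    ext ω
    simp only [Set.mem_setOf_eq, Set.mem_iUnion, Set.mem_iInter, mem_cluster_iff]
  rw [h]
  exact MeasurableSet.iUnion fun w =>
    MeasurableSet.biInter (w.edges.finite_toSet.countable) fun e _ => measurableSet_edge e

lemma measurable_clusterSize [DecidableEq V] [Countable V] (G : SimpleGraph V) [G.LocallyFinite]
    (x : V) : Measurable fun ω : Sym2 V → Bool => clusterSize G ω x := by
  classical
  have h : ∀ ω : Sym2 V → Bool, clusterSize G ω x =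
      ∑' y : V, if y ∈ cluster G ω x then (1 : ℝ≥0∞) else 0 := by
    intro ω
    rw [clusterSize, ← ENNReal.tsum_set_one,
      tsum_subtype (cluster G ω x) (fun _ => (1 : ℝ≥0∞))]
    exact tsum_congr fun y => by simp [Set.indicator_apply]
  simp only [h]
  exact Measurable.ennreal_tsum fun y =>
    Measurable.ite (measurableSet_mem_cluster G x y) measurable_const measurable_const

lemma measure_edge_open {G : SimpleGraph V} {p : ℝ≥0∞} {μ : Measure (Sym2 V → Bool)}
    (hμ : IsBernoulli G p μ) {e : Sym2 V} (he : e ∈ G.edgeSet) :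
    μ {ω | ω e = true} = p := by
  have h := hμ.2 {e} (by simpa using he) (fun _ => true)
  simpa using h

end Aux

section Aux2

open Set SimpleGraph

variable {V : Type*}

open Classical in
/-- The inner boundary as a `Finset`. -/
noncomputable def IB [DecidableEq V] (G : SimpleGraph V) {n : ℕ} (s : Fin (n + 1) → V) :
    Finset V :=
  (trace s).filter (fun x => ∃ y, G.Adj x y ∧ y ∉ trace s)

lemma innerBoundary_eq [DecidableEq V] (G : SimpleGraph V) {n : ℕ} (s : Fin (n + 1) → V) :
    innerBoundary G s = ↑(IB G s) := by
  classical
  ext x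
  simp [innerBoundary, IB, Finset.mem_filter]

lemma boundarySize_eq [DecidableEq V] (G : SimpleGraph V) {n : ℕ} (s : Fin (n + 1) → V) :
    boundarySize G s = (IB G s).card := by
  rw [boundarySize, innerBoundary_eq, Set.ncard_coe_finset]

lemma mem_IB_prop [DecidableEq V] {G : SimpleGraph V} {n : ℕ} {s : Fin (n + 1) → V} {x : V}
    (hx : x ∈ IB G s) : x ∈ trace s ∧ ∃ y, G.Adj x y ∧ y ∉ trace s := by
  classical
  simpa [IB] using hx

lemma trace_subset_union [DecidableEq V] (G : SimpleGraph V) (ω : Sym2 V → Bool) {n : ℕ}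
    (s : Fin (n + 1) → V) : (↑(trace s) : Set V) ⊆ ⋃ i, cluster G ω (s i) := by
  intro x hx
  obtain ⟨i, -, rfl⟩ := Finset.mem_image.1 hx
  exact Set.mem_iUnion.2 ⟨i, SimpleGraph.Reachable.refl _⟩

lemma lower_det [DecidableEq V] (G : SimpleGraph V) (ω : Sym2 V → Bool) {n : ℕ}
    (s : Fin (n + 1) → V) :
    (rangeSize s : ℝ≥0∞) ≤ ((⋃ i, cluster G ω (s i)).encard : ℝ≥0∞) := by
  have h1 : ((↑(trace s) : Set V).encard : ℝ≥0∞) ≤ ((⋃ i, cluster G ω (s i)).encard : ℝ≥0∞) :=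
    ENat.toENNReal_le.2 (Set.encard_mono (trace_subset_union G ω s))
  rw [Set.encard_coe_eq_coe_finsetCard] at h1
  simpa [rangeSize] using h1

lemma exit_walk [DecidableEq V] {G : SimpleGraph V} {ω : Sym2 V → Bool} {n : ℕ}
    {s : Fin (n + 1) → V} :
    ∀ {a c : V}, (openGraph G ω).Walk a c → a ∈ trace s → c ∉ trace s →
      ∃ x ∈ IB G s, c ∈ cluster G ω x := by
  classical
  intro a c w
  induction w with
  | nil => intro ha hc; exact absurd ha hc
  | @cons a b c h w ih =>
    intro ha hc
    by_cases hb : b ∈ trace s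
    · exact ih hb hc
    · refine ⟨a, ?_, (SimpleGraph.Walk.cons h w).reachable⟩
      simp only [IB, Finset.mem_filter]
      exact ⟨ha, b, h.1, hb⟩

lemma union_subset_aux [DecidableEq V] (G : SimpleGraph V) (ω : Sym2 V → Bool) {n : ℕ}
    (s : Fin (n + 1) → V) :
    (⋃ i, cluster G ω (s i)) ⊆ ↑(trace s) ∪ ⋃ x ∈ IB G s, cluster G ω x := by
  classical
  intro z hz
  obtain ⟨i, hi⟩ := Set.mem_iUnion.1 hz
  by_cases hz' : z ∈ trace s
  · exact Or.inl hz'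
  · right
    obtain ⟨w⟩ := hi
    obtain ⟨x, hx, hzx⟩ := exit_walk w (Finset.mem_image.2 ⟨i, Finset.mem_univ i, rfl⟩) hz'
    exact Set.mem_biUnion hx hzx

lemma encard_biUnion_le [DecidableEq V] (F : Finset V) (f : V → Set V) :
    (((⋃ x ∈ F, f x).encard : ℝ≥0∞)) ≤ ∑ x ∈ F, ((f x).encard : ℝ≥0∞) := by
  classical
  induction F using Finset.induction with
  | empty => simp
  | insert a F hnotmem ih =>
    rw [Finset.sum_insert hnotmem]
    have h1 : (⋃ x ∈ insert a F, f x) = f a ∪ ⋃ x ∈ F, f x := by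
      simp [Set.biUnion_insert]
    rw [h1]
    calc (((f a ∪ ⋃ x ∈ F, f x).encard : ℝ≥0∞))
        ≤ (((f a).encard + (⋃ x ∈ F, f x).encard : ℕ∞) : ℝ≥0∞) :=
          ENat.toENNReal_le.2 (Set.encard_union_le _ _)
      _ = ((f a).encard : ℝ≥0∞) + ((⋃ x ∈ F, f x).encard : ℝ≥0∞) := ENat.toENNReal_add _ _
      _ ≤ ((f a).encard : ℝ≥0∞) + ∑ x ∈ F, ((f x).encard : ℝ≥0∞) := add_le_add_right ih _

lemma per_omega_upper [DecidableEq V] (G : SimpleGraph V) (ω : Sym2 V → Bool) {n : ℕ}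
    (s : Fin (n + 1) → V) :
    ((⋃ i, cluster G ω (s i)).encard : ℝ≥0∞) ≤
      (rangeSize s : ℝ≥0∞) + ∑ x ∈ IB G s, clusterSize G ω x := by
  calc ((⋃ i, cluster G ω (s i)).encard : ℝ≥0∞)
      ≤ (((↑(trace s) ∪ ⋃ x ∈ IB G s, cluster G ω x : Set V)).encard : ℝ≥0∞) :=
        ENat.toENNReal_le.2 (Set.encard_mono (union_subset_aux G ω s))
    _ ≤ (((↑(trace s) : Set V).encard : ℕ∞) : ℝ≥0∞) + ((⋃ x ∈ IB G s, cluster G ω x).encard : ℝ≥0∞) := by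
        rw [← ENat.toENNReal_add]
        exact ENat.toENNReal_le.2 (Set.encard_union_le _ _)
    _ ≤ (rangeSize s : ℝ≥0∞) + ∑ x ∈ IB G s, clusterSize G ω x := by
        refine add_le_add ?_ ?_
        · rw [Set.encard_coe_eq_coe_finsetCard]
          simp [rangeSize]
        · exact encard_biUnion_le _ _

end Aux2

section Aux3

open Set SimpleGraph

variable {V : Type*}

lemma per_path_lower [DecidableEq V] (G : SimpleGraph V) [G.LocallyFinite]
    {Δ : ℕ} (hΔ : ∀ x : V, G.degree x ≤ Δ) (hΔpos : 0 < Δ)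
    {p : ℝ≥0∞} {μ : Measure (Sym2 V → Bool)} (hμ : IsBernoulli G p μ)
    {n : ℕ} (s : Fin (n + 1) → V) :
    (rangeSize s : ℝ≥0∞) + p / Δ * (boundarySize G s : ℝ≥0∞) ≤
      ∫⁻ ω, ((⋃ i, cluster G ω (s i)).encard : ℝ≥0∞) ∂μ := by
  classical
  haveI : IsProbabilityMeasure μ := hμ.1
  set T := trace s with hT
  set Bd := IB G s with hBd
  set nb : V → V := fun x => if h : ∃ y, G.Adj x y ∧ y ∉ trace s then h.choose else x with hnb
  have hnbP : ∀ x ∈ Bd, G.Adj x (nb x) ∧ nb x ∉ T := by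
    intro x hx
    have hx' := (mem_IB_prop hx).2
    simp only [hnb, dif_pos hx']
    exact hx'.choose_spec
  set ext := Bd.image nb with hext
  set pre : V → V := fun y => if h : ∃ x, x ∈ Bd ∧ nb x = y then h.choose else y with hpre
  have hpreP : ∀ y ∈ ext, pre y ∈ Bd ∧ nb (pre y) = y := by
    intro y hy
    obtain ⟨x, hx, hxy⟩ := Finset.mem_image.1 hy
    have h : ∃ x, x ∈ Bd ∧ nb x = y := ⟨x, hx, hxy⟩
    simp only [hpre, dif_pos h]
    exact h.choose_spec
  have hadj : ∀ y ∈ ext, G.Adj (pre y) y := by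
    intro y hy
    obtain ⟨h1, h2⟩ := hpreP y hy
    have := (hnbP _ h1).1
    rwa [h2] at this
  have hpreT : ∀ y ∈ ext, pre y ∈ T := fun y hy => (mem_IB_prop (hpreP y hy).1).1
  have hextT : ∀ y ∈ ext, y ∉ T := by
    intro y hy
    obtain ⟨h1, h2⟩ := hpreP y hy
    have := (hnbP _ h1).2
    rwa [h2] at this
  -- cardinality bound
  have hcard : Bd.card ≤ Δ * ext.card := by
    refine Finset.card_le_mul_card_image Bd Δ ?_
    intro a _
    have hsub : Bd.filter (fun x => nb x = a) ⊆ G.neighborFinset a := by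
      intro x hx
      obtain ⟨hx1, hx2⟩ := Finset.mem_filter.1 hx
      have h := (hnbP x hx1).1
      rw [hx2] at h
      exact (G.mem_neighborFinset a x).2 h.symm
    calc (Bd.filter (fun x => nb x = a)).card ≤ (G.neighborFinset a).card :=
          Finset.card_le_card hsub
      _ ≤ Δ := hΔ a
  -- pointwise lower bound
  have hpoint : ∀ ω : Sym2 V → Bool,
      (T.card : ℝ≥0∞) + ∑ y ∈ ext, (if ω s(pre y, y) = true then (1 : ℝ≥0∞) else 0) ≤
        ((⋃ i, cluster G ω (s i)).encard : ℝ≥0∞) := by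
    intro ω
    set Aω := T ∪ ext.filter (fun y => ω s(pre y, y) = true) with hAω
    have hdisj : Disjoint T (ext.filter fun y => ω s(pre y, y) = true) := by
      rw [Finset.disjoint_left]
      intro x hx hx'
      exact hextT x (Finset.mem_filter.1 hx').1 hx
    have hsubA : (↑Aω : Set V) ⊆ ⋃ i, cluster G ω (s i) := by
      intro x hx
      rw [hAω, Finset.coe_union, Set.mem_union] at hx
      rcases hx with hx | hx
      · exact trace_subset_union G ω s hx
      · rw [Finset.coe_filter, Set.mem_setOf_eq] at hx
        obtain ⟨hx1, hx2⟩ := hx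
        obtain ⟨i, -, hi⟩ := Finset.mem_image.1 (hpreT x hx1)
        refine Set.mem_iUnion.2 ⟨i, ?_⟩
        have hadj' : (openGraph G ω).Adj (pre x) x := ⟨hadj x hx1, hx2⟩
        rw [hi]
        exact hadj'.reachable
    have hA1 : ((↑Aω : Set V).encard : ℝ≥0∞) ≤ ((⋃ i, cluster G ω (s i)).encard : ℝ≥0∞) :=
      ENat.toENNReal_le.2 (Set.encard_mono hsubA)
    rw [Set.encard_coe_eq_coe_finsetCard, hAω, Finset.card_union_of_disjoint hdisj] at hA1
    refine le_trans (le_of_eq ?_) hA1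
    push_cast
    congr 1
    rw [Finset.card_filter]
    push_cast
    rfl
  -- integral of the lower bound
  have hmeas : ∀ y ∈ ext, Measurable fun ω : Sym2 V → Bool =>
      (if ω s(pre y, y) = true then (1 : ℝ≥0∞) else 0) := by
    intro y _
    exact Measurable.ite (measurableSet_edge _) measurable_const measurable_const
  have hint : (∫⁻ ω, ((T.card : ℝ≥0∞) +
        ∑ y ∈ ext, (if ω s(pre y, y) = true then (1 : ℝ≥0∞) else 0)) ∂μ) =
      (T.card : ℝ≥0∞) + p * ext.card := by
    rw [lintegral_add_left measurable_const, lintegral_const, measure_univ, mul_one,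
      lintegral_finset_sum _ hmeas]
    congr 1
    have hterm : ∀ y ∈ ext,
        (∫⁻ ω, (if ω s(pre y, y) = true then (1 : ℝ≥0∞) else 0) ∂μ) = p := by
      intro y hy
      have hind : ∀ ω : Sym2 V → Bool, (if ω s(pre y, y) = true then (1 : ℝ≥0∞) else 0) =
          Set.indicator {ω : Sym2 V → Bool | ω s(pre y, y) = true} 1 ω := by
        intro ω
        simp [Set.indicator_apply]
      simp only [hind]
      rw [lintegral_indicator_one (measurableSet_edge _)]
      exact measure_edge_open hμ (G.mem_edgeSet.2 (hadj y hy))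
    rw [Finset.sum_congr rfl hterm, Finset.sum_const, nsmul_eq_mul, mul_comm]
  -- combine
  have hLcard : p / Δ * (boundarySize G s : ℝ≥0∞) ≤ p * ext.card := by
    have h1 : (boundarySize G s : ℝ≥0∞) ≤ (Δ : ℝ≥0∞) * ext.card := by
      rw [boundarySize_eq]
      exact_mod_cast Nat.cast_le.2 hcard
    calc p / Δ * (boundarySize G s : ℝ≥0∞) ≤ p / Δ * ((Δ : ℝ≥0∞) * ext.card) :=
          mul_le_mul_right h1 _
      _ = p / (Δ : ℝ≥0∞) * (Δ : ℝ≥0∞) * ext.card := by ring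
      _ = p * ext.card := by
          rw [ENNReal.div_mul_cancel (by exact_mod_cast hΔpos.ne') (ENNReal.natCast_ne_top Δ)]
  calc (rangeSize s : ℝ≥0∞) + p / Δ * (boundarySize G s : ℝ≥0∞)
      ≤ (T.card : ℝ≥0∞) + p * ext.card := add_le_add_right hLcard _
    _ = ∫⁻ ω, ((T.card : ℝ≥0∞) +
        ∑ y ∈ ext, (if ω s(pre y, y) = true then (1 : ℝ≥0∞) else 0)) ∂μ := hint.symm
    _ ≤ ∫⁻ ω, ((⋃ i, cluster G ω (s i)).encard : ℝ≥0∞) ∂μ := lintegral_mono hpoint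

lemma per_path_upper [DecidableEq V] [Countable V] (G : SimpleGraph V) [G.LocallyFinite]
    {p : ℝ≥0∞} {μ : Measure (Sym2 V → Bool)} (hμ : IsBernoulli G p μ)
    {n : ℕ} (s : Fin (n + 1) → V) :
    (∫⁻ ω, ((⋃ i, cluster G ω (s i)).encard : ℝ≥0∞) ∂μ) ≤
      (rangeSize s : ℝ≥0∞) +
        (⨆ x : V, ∫⁻ ω, clusterSize G ω x ∂μ) * (boundarySize G s : ℝ≥0∞) := by
  classical
  haveI : IsProbabilityMeasure μ := hμ.1
  calc (∫⁻ ω, ((⋃ i, cluster G ω (s i)).encard : ℝ≥0∞) ∂μ)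
      ≤ ∫⁻ ω, ((rangeSize s : ℝ≥0∞) + ∑ x ∈ IB G s, clusterSize G ω x) ∂μ :=
        lintegral_mono fun ω => per_omega_upper G ω s
    _ = (rangeSize s : ℝ≥0∞) + ∑ x ∈ IB G s, ∫⁻ ω, clusterSize G ω x ∂μ := by
        rw [lintegral_add_left measurable_const, lintegral_const, measure_univ, mul_one,
          lintegral_finset_sum _ (fun x _ => measurable_clusterSize G x)]
    _ ≤ (rangeSize s : ℝ≥0∞) + ∑ _x ∈ IB G s, (⨆ x : V, ∫⁻ ω, clusterSize G ω x ∂μ) := by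
        refine add_le_add_right (Finset.sum_le_sum fun x _ => ?_) _
        exact le_iSup (fun x : V => ∫⁻ ω, clusterSize G ω x ∂μ) x
    _ = (rangeSize s : ℝ≥0∞) +
        (⨆ x : V, ∫⁻ ω, clusterSize G ω x ∂μ) * (boundarySize G s : ℝ≥0∞) := by
        rw [Finset.sum_const, nsmul_eq_mul, boundarySize_eq, mul_comm]

end Aux3


/-- deterministic sandwich `R_n ≤ U_n ≤ R_n + ∑_{x ∈ ∂R_n}|C_x|` and the
corresponding bounds in expectation. -/
theorem statement_8 {V : Type*} [DecidableEq V] (G : SimpleGraph V) [G.LocallyFinite]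
    (hV : Infinite V) (hconn : G.Connected)
    (Δ : ℕ) (hΔ : ∀ x : V, G.degree x ≤ Δ) (hΔpos : 0 < Δ)
    (p : ℝ≥0∞) (hp : p ≤ 1)
    (μ : Measure (Sym2 V → Bool)) (hμ : IsBernoulli G p μ)
    (hsup : (⨆ x : V, ∫⁻ ω, clusterSize G ω x ∂μ) < ⊤)
    (o : V) (n : ℕ) :
    (∀ (s : Fin (n + 1) → V) (ω : Sym2 V → Bool),
        (rangeSize s : ℝ≥0∞) ≤ ((⋃ i, cluster G ω (s i)).encard : ℝ≥0∞) ∧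
        ((⋃ i, cluster G ω (s i)).encard : ℝ≥0∞) ≤
          (rangeSize s : ℝ≥0∞) + ∑' x : innerBoundary G s, clusterSize G ω (x : V)) ∧
      expRange G o n + p / Δ * expBoundary G o n ≤ expUnion G μ o n ∧
      expUnion G μ o n ≤
        expRange G o n + (⨆ x : V, ∫⁻ ω, clusterSize G ω x ∂μ) * expBoundary G o n := by
    classical
  haveI : Countable V := countable_of_connected hconn
  refine ⟨?_, ?_, ?_⟩
  · intro s ω
    refine ⟨lower_det G ω s, ?_⟩
    have ht : (∑' x : innerBoundary G s, clusterSize G ω (x : V)) =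
        ∑ x ∈ IB G s, clusterSize G ω x := by
      rw [innerBoundary_eq]
      exact Finset.tsum_subtype' (IB G s) fun x => clusterSize G ω x
    rw [ht]
    exact per_omega_upper G ω s
  · rw [expRange, expBoundary, expUnion, ← ENNReal.tsum_mul_left, ← ENNReal.tsum_add]
    refine ENNReal.tsum_le_tsum fun s => ?_
    calc pathProb G o s * (rangeSize s : ℝ≥0∞) +
          p / Δ * (pathProb G o s * (boundarySize G s : ℝ≥0∞))
        = pathProb G o s * ((rangeSize s : ℝ≥0∞) + p / Δ * (boundarySize G s : ℝ≥0∞)) := by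
          ring
      _ ≤ pathProb G o s * ∫⁻ ω, ((⋃ i, cluster G ω (s i)).encard : ℝ≥0∞) ∂μ :=
          mul_le_mul_right (per_path_lower G hΔ hΔpos hμ s) _
  · rw [expRange, expBoundary, expUnion, ← ENNReal.tsum_mul_left, ← ENNReal.tsum_add]
    refine ENNReal.tsum_le_tsum fun s => ?_
    calc pathProb G o s * ∫⁻ ω, ((⋃ i, cluster G ω (s i)).encard : ℝ≥0∞) ∂μ
        ≤ pathProb G o s * ((rangeSize s : ℝ≥0∞) +
            (⨆ x : V, ∫⁻ ω, clusterSize G ω x ∂μ) * (boundarySize G s : ℝ≥0∞)) :=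
          mul_le_mul_right (per_path_upper G hμ s) _
      _ = pathProb G o s * (rangeSize s : ℝ≥0∞) +
          (⨆ x : V, ∫⁻ ω, clusterSize G ω x ∂μ) *
            (pathProb G o s * (boundarySize G s : ℝ≥0∞)) := by ring

end PaperUnion
end
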